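/- Let q be a prime power, r ≥ 1 an integer, δ ∈ (0, (q−1)/q) a real number, and ε > 0. Then for all sufficiently large n divisible by r+1 there exists a q-ary linear code C ⊆ F_q^n of minimum distance at least δn and dimension at least n·(r/(r+1) − min_{0<s≤1}{ (1/(r+1))·log_q b(s) − δ·log_q s } − ε), such that every coordinate of C has a recovering set of size at most r, where b(s) = q^{−1}((1 + (q−1)s)^{r+1} + (q−1)(1−s)^{r+1}). -/

import Mathlib

open Finset

section AuxGV

variable {F : Type*} [Field F] [Fintype F] [DecidableEq F]



lemma pow_hammingNorm_eq_prod (s : ℝ) {ι : Type*} [Fintype ι] (f : ι → F) :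
    s ^ hammingNorm f = ∏ i, (if f i = 0 then 1 else s) := by
  classical
  rw [Finset.prod_ite, Finset.prod_const, Finset.prod_const, one_pow, one_mul, hammingNorm]

/-- Weight enumerator of the "sum = a" slice of `Fin ℓ → F`. -/
lemma block_enum (s : ℝ) (ℓ : ℕ) (a : F) :
    ∑ c : Fin ℓ → F, (if (∑ i, c i) = a then ∏ i, (if c i = 0 then 1 else s) else 0)
      = (if a = 0
          then ((1 + ((Fintype.card F : ℝ) - 1) * s) ^ ℓ
              + ((Fintype.card F : ℝ) - 1) * (1 - s) ^ ℓ) / (Fintype.card F : ℝ)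
          else ((1 + ((Fintype.card F : ℝ) - 1) * s) ^ ℓ - (1 - s) ^ ℓ) / (Fintype.card F : ℝ)) := by
  classical
  set κ : ℝ := (Fintype.card F : ℝ) with hκ
  have h2n : 2 ≤ Fintype.card F := Fintype.one_lt_card
  have hκ2 : (2 : ℝ) ≤ κ := by rw [hκ]; exact_mod_cast h2n
  have hκ0 : κ ≠ 0 := by linarith
  induction ℓ generalizing a with
  | zero =>
    by_cases ha : a = 0 <;>
      simp [ha, eq_comm, Finset.sum_ite_eq, hκ0]
  | succ ℓ ih =>
    have key : ∑ c : Fin (ℓ+1) → F, (if (∑ i, c i) = a then ∏ i, (if c i = 0 then 1 else s) else 0)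
        = ∑ x : F, ∑ c : Fin ℓ → F,
            (if x = 0 then 1 else s) * (if (∑ i, c i) = a - x then ∏ i, (if c i = 0 then 1 else s) else 0) := by
      rw [← (Fin.consEquiv (fun _ : Fin (ℓ+1) => F)).sum_comp]
      rw [Fintype.sum_prod_type]
      refine Finset.sum_congr rfl fun x _ => Finset.sum_congr rfl fun c _ => ?_
      have h1 : ∑ i, (Fin.consEquiv (fun _ : Fin (ℓ+1) => F)) (x, c) i = x + ∑ i, c i := by
        simp [Fin.consEquiv, Fin.sum_cons]
      have h2 : ∏ i, (if (Fin.consEquiv (fun _ : Fin (ℓ+1) => F)) (x, c) i = 0 then (1:ℝ) else s)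
          = (if x = 0 then 1 else s) * ∏ i, (if c i = 0 then (1:ℝ) else s) := by
        simp [Fin.consEquiv, Fin.prod_univ_succ]
      rw [h1, h2, mul_ite, mul_zero]
      exact if_congr eq_sub_iff_add_eq'.symm rfl rfl
    rw [key]
    have step : ∀ x : F, (∑ c : Fin ℓ → F,
        (if x = 0 then (1:ℝ) else s) * (if (∑ i, c i) = a - x then ∏ i, (if c i = 0 then 1 else s) else 0))
        = (if x = 0 then (1:ℝ) else s) *
          (if x = a
            then ((1 + (κ - 1) * s) ^ ℓ + (κ - 1) * (1 - s) ^ ℓ) / κ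
            else ((1 + (κ - 1) * s) ^ ℓ - (1 - s) ^ ℓ) / κ) := by
      intro x
      rw [← Finset.mul_sum, ih (a - x)]
      congr 1
      exact if_congr (by rw [sub_eq_zero, eq_comm]) rfl rfl
    rw [Finset.sum_congr rfl (fun x _ => step x)]
    set U : ℝ := ((1 + (κ - 1) * s) ^ ℓ + (κ - 1) * (1 - s) ^ ℓ) / κ with hU
    set W : ℝ := ((1 + (κ - 1) * s) ^ ℓ - (1 - s) ^ ℓ) / κ with hW
    by_cases ha : a = 0
    · subst ha
      have hpt : ∀ x : F, (if x = 0 then (1:ℝ) else s) * (if x = 0 then U else W)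
          = (if x = 0 then U - s * W else 0) + s * W := by
        intro x; split_ifs with h1 <;> ring
      rw [Finset.sum_congr rfl (fun x _ => hpt x), Finset.sum_add_distrib,
        Finset.sum_ite_eq' Finset.univ (0 : F) (fun _ => U - s * W),
        Finset.sum_const, Finset.card_univ, if_pos (Finset.mem_univ _), if_pos rfl]
      rw [hU, hW, pow_succ, pow_succ]
      have : (Fintype.card F : ℝ) = κ := rfl
      rw [nsmul_eq_mul, this]
      field_simp
      ring
    · have hpt : ∀ x : F, (if x = 0 then (1:ℝ) else s) * (if x = a then U else W)
          = ((if x = 0 then W - s * W else 0) + (if x = a then s * U - s * W else 0)) + s * W := by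
        intro x
        split_ifs with h1 h2 <;> try ring
        exact absurd (h2.symm.trans h1) ha
      rw [Finset.sum_congr rfl (fun x _ => hpt x), Finset.sum_add_distrib, Finset.sum_add_distrib,
        Finset.sum_ite_eq' Finset.univ (0 : F) (fun _ => W - s * W),
        Finset.sum_ite_eq' Finset.univ (a : F) (fun _ => s * U - s * W),
        Finset.sum_const, Finset.card_univ, if_pos (Finset.mem_univ _), if_pos (Finset.mem_univ _),
        if_neg ha]
      rw [hU, hW, pow_succ, pow_succ]
      have : (Fintype.card F : ℝ) = κ := rfl
      rw [nsmul_eq_mul, this]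
      field_simp
      ring

lemma sum_pow_weight_blocks {F : Type*} [Field F] [Fintype F] [DecidableEq F] (s : ℝ) (t ℓ n : ℕ) (e : Fin t × Fin ℓ ≃ Fin n) :
    ∑ v : Fin n → F, (if (∀ b, ∑ j, v (e (b, j)) = 0) then s ^ hammingNorm v else 0)
      = (((1 + ((Fintype.card F : ℝ) - 1) * s) ^ ℓ
          + ((Fintype.card F : ℝ) - 1) * (1 - s) ^ ℓ) / (Fintype.card F : ℝ)) ^ t := by
  classical
  set E : (Fin t → Fin ℓ → F) ≃ (Fin n → F) :=
    (Equiv.curry (Fin t) (Fin ℓ) F).symm.trans (Equiv.arrowCongr e (Equiv.refl F)) with hE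
  rw [← E.sum_comp]
  have hEapp : ∀ (y : Fin t → Fin ℓ → F) (b : Fin t) (j : Fin ℓ), E y (e (b, j)) = y b j := by
    intro y b j
    simp [hE, Equiv.curry, Equiv.arrowCongr, Function.uncurry]
  have step1 : ∀ y : Fin t → Fin ℓ → F,
      (if (∀ b, ∑ j, E y (e (b, j)) = 0) then s ^ hammingNorm (E y) else 0)
        = ∏ b, (if (∑ j, y b j) = 0 then ∏ j, (if y b j = 0 then 1 else s) else 0) := by
    intro y
    have hnorm : s ^ hammingNorm (E y) = ∏ b, ∏ j, (if y b j = 0 then (1:ℝ) else s) := by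
      rw [pow_hammingNorm_eq_prod,
        ← Equiv.prod_comp e (fun i => if E y i = 0 then (1:ℝ) else s), Fintype.prod_prod_type]
      exact Finset.prod_congr rfl fun b _ => Finset.prod_congr rfl fun j _ => by rw [hEapp y b j]
    by_cases h : ∀ b, ∑ j, y b j = 0
    · rw [if_pos (by intro b; rw [Finset.sum_congr rfl fun j _ => hEapp y b j]; exact h b), hnorm]
      exact (Finset.prod_congr rfl fun b _ => (if_pos (h b)).symm)
    · rw [if_neg (by intro hc; exact h (fun b => by
        rw [← Finset.sum_congr rfl fun j _ => hEapp y b j]; exact hc b))]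
      obtain ⟨b, hb⟩ := not_forall.mp h
      exact (Finset.prod_eq_zero (Finset.mem_univ b)
        (show (if (∑ j, y b j) = 0 then ∏ j, (if y b j = 0 then (1:ℝ) else s) else 0) = 0
          from if_neg hb)).symm
  rw [Finset.sum_congr rfl fun y _ => step1 y]
  have := Finset.prod_univ_sum (fun _ : Fin t => (univ : Finset (Fin ℓ → F)))
    (fun _ c => if (∑ j, c j) = 0 then ∏ j, (if c j = 0 then (1:ℝ) else s) else 0)
  rw [Fintype.piFinset_univ] at this
  rw [← this]
  have hfac : ∀ b : Fin t, (∑ c : Fin ℓ → F,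
      if (∑ j, c j) = 0 then ∏ j, (if c j = 0 then (1:ℝ) else s) else 0)
      = ((1 + ((Fintype.card F : ℝ) - 1) * s) ^ ℓ
          + ((Fintype.card F : ℝ) - 1) * (1 - s) ^ ℓ) / (Fintype.card F : ℝ) := by
    intro b
    rw [block_enum s ℓ (0 : F), if_pos rfl]
  rw [Finset.prod_congr rfl fun b _ => hfac b, Finset.prod_const, Finset.card_univ,
    Fintype.card_fin]



lemma gv_greedy {n : ℕ} (d k : ℕ) (hd : 1 ≤ d)
    (V : Submodule F (Fin n → F)) (B : Finset (Fin n → F))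
    (hB : ∀ v, v ∈ B ↔ v ∈ V ∧ hammingNorm v < d)
    (hcount : ∀ i, i < k →
      (Fintype.card F - 1) * Fintype.card F ^ i * B.card
        < Nat.card {v : Fin n → F // v ∈ V}) :
    ∃ C : Submodule F (Fin n → F), C ≤ V ∧ Module.finrank F C = k ∧
      ∀ x ∈ C, x ≠ 0 → d ≤ hammingNorm x := by
  classical
  induction k with
  | zero =>
    refine ⟨⊥, bot_le, finrank_bot F _, fun x hx hxne => ?_⟩
    exact absurd (Submodule.mem_bot F |>.mp hx) hxne
  | succ k ih =>
    obtain ⟨C, hCV, hCrank, hCw⟩ := ih (fun i hi => hcount i (Nat.lt_succ_of_lt hi))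
    set VF : Finset (Fin n → F) := univ.filter (fun v => v ∈ V) with hVF
    have hVFcard : Nat.card {v : Fin n → F // v ∈ V} = VF.card := by
      rw [Nat.card_eq_fintype_card, Fintype.card_of_subtype (p := (· ∈ V)) VF
        (fun x => by simp [hVF])]
    set CF : Finset (Fin n → F) := univ.filter (fun v => v ∈ C) with hCF
    have hCFcard : CF.card = Fintype.card F ^ k := by
      rw [← Fintype.card_of_subtype (p := (· ∈ C)) CF (fun x => by simp [hCF]),
        Module.card_eq_pow_finrank (K := F) (V := C), hCrank]
    set bad : Finset (Fin n → F) :=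
      CF.biUnion (fun c => ((univ : Finset F).erase 0).biUnion
        (fun α => B.image (fun b => α⁻¹ • (b - c)))) with hbad
    have hbadcard : bad.card ≤ Fintype.card F ^ k * ((Fintype.card F - 1) * B.card) := by
      calc bad.card ≤ ∑ c ∈ CF, (((univ : Finset F).erase 0).biUnion
            (fun α => B.image (fun b => α⁻¹ • (b - c)))).card := Finset.card_biUnion_le
        _ ≤ ∑ c ∈ CF, ∑ α ∈ (univ : Finset F).erase 0, (B.image (fun b => α⁻¹ • (b - c))).card :=
            Finset.sum_le_sum (fun c _ => Finset.card_biUnion_le)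
        _ ≤ ∑ c ∈ CF, ∑ α ∈ (univ : Finset F).erase 0, B.card :=
            Finset.sum_le_sum (fun c _ => Finset.sum_le_sum (fun α _ => Finset.card_image_le))
        _ = Fintype.card F ^ k * ((Fintype.card F - 1) * B.card) := by
            rw [Finset.sum_const, Finset.sum_const, Finset.card_erase_of_mem (mem_univ 0),
              Finset.card_univ, hCFcard, smul_eq_mul, smul_eq_mul]
    have hbadlt : bad.card < VF.card := by
      refine lt_of_le_of_lt hbadcard ?_
      have h := hcount k (Nat.lt_succ_self k)
      calc Fintype.card F ^ k * ((Fintype.card F - 1) * B.card)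
          = (Fintype.card F - 1) * Fintype.card F ^ k * B.card := by ring
        _ < VF.card := hVFcard ▸ h
    have hex : ∃ v, v ∈ V ∧ v ∉ bad := by
      by_contra h
      push_neg at h
      have hsub : VF ⊆ bad := fun v hv => h v ((mem_filter.mp hv).2)
      exact absurd (Finset.card_le_card hsub) (not_le.mpr hbadlt)
    obtain ⟨v, hvV, hvbad⟩ := hex
    have hbadmem : ∀ w : Fin n → F, w ∈ bad ↔
        ∃ c ∈ C, ∃ α : F, α ≠ 0 ∧ ∃ b ∈ B, α⁻¹ • (b - c) = w := by
      intro w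
      simp only [hbad, Finset.mem_biUnion, Finset.mem_image, Finset.mem_erase, mem_univ,
        and_true, hCF, mem_filter, true_and]
    have h0B : (0 : Fin n → F) ∈ B := (hB 0).mpr ⟨V.zero_mem, by simp [hammingNorm]; omega⟩
    have hvC : v ∉ C := by
      intro hvC
      apply hvbad
      rw [hbadmem]
      exact ⟨-v, C.neg_mem hvC, 1, one_ne_zero, 0, h0B, by simp⟩
    have hvne : v ≠ 0 := fun h => hvC (h ▸ C.zero_mem)
    refine ⟨C ⊔ Submodule.span F {v}, sup_le hCV
      ((Submodule.span_singleton_le_iff_mem _ _).mpr hvV), ?_, ?_⟩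
    · have hlt : C < C ⊔ Submodule.span F {v} :=
        lt_of_le_of_ne le_sup_left (fun h => hvC
          (h ▸ Submodule.mem_sup_right (Submodule.mem_span_singleton_self v)))
      have h1 : k < Module.finrank F ↥(C ⊔ Submodule.span F {v}) :=
        hCrank ▸ Submodule.finrank_lt_finrank_of_lt hlt
      have h2 := Submodule.finrank_sup_add_finrank_inf_eq C (Submodule.span F {v})
      rw [hCrank, finrank_span_singleton hvne] at h2
      omega
    · intro x hx hxne
      rw [Submodule.mem_sup] at hx
      obtain ⟨c, hc, z, hz, rfl⟩ := hx
      obtain ⟨α, rfl⟩ := Submodule.mem_span_singleton.mp hz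
      by_cases hα : α = 0
      · subst hα
        rw [zero_smul, add_zero] at hxne ⊢
        exact hCw c hc hxne
      · by_contra hw
        push_neg at hw
        apply hvbad
        rw [hbadmem]
        refine ⟨c, hc, α, hα, c + α • v, (hB _).mpr ⟨V.add_mem (hCV hc) (V.smul_mem α hvV), hw⟩, ?_⟩
        rw [add_sub_cancel_left, smul_smul, inv_mul_cancel₀ hα, one_smul]

end AuxGV

set_option maxHeartbeats 1000000 in
/-- Asymptotic Gilbert–Varshamov-type bound for `q`-ary LRC codes with
locality `r`: for every `δ ∈ (0, (q−1)/q)` and `ε > 0`, for all sufficiently large `n`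
divisible by `r+1` there are linear LRC codes of relative distance `δ` and rate at least
`r/(r+1) − min_{0<s≤1}{(1/(r+1))·log_q b(s) − δ·log_q s} − ε`. -/
theorem gv_bound_lrc_asymptotic {F : Type*} [Field F] [Fintype F] [DecidableEq F]
    (q r : ℕ) (hq : Fintype.card F = q) (hr : 1 ≤ r)
    (δ : ℝ) (hδ0 : 0 < δ) (hδ1 : δ < ((q : ℝ) - 1) / q) (ε : ℝ) (hε : 0 < ε) :
    ∃ N : ℕ, ∀ n : ℕ, N ≤ n → (r + 1) ∣ n →
      ∃ C : Submodule F (Fin n → F),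
        (n : ℝ) * ((r : ℝ) / ((r : ℝ) + 1) -
            sInf ((fun s : ℝ => (1 / ((r : ℝ) + 1)) *
                Real.logb q ((1 / (q : ℝ)) * ((1 + ((q : ℝ) - 1) * s) ^ (r + 1) +
                  ((q : ℝ) - 1) * (1 - s) ^ (r + 1))) -
                δ * Real.logb q s) '' Set.Ioc (0 : ℝ) 1) - ε) ≤
          (Module.finrank F C : ℝ) ∧
        (∀ x ∈ C, ∀ y ∈ C, x ≠ y → δ * n ≤ (hammingDist x y : ℝ)) ∧
        (∀ i : Fin n, ∃ R : Finset (Fin n), i ∉ R ∧ R.card ≤ r ∧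
          ∀ x ∈ C, ∀ y ∈ C, (∀ j ∈ R, x j = y j) → x i = y i) := by
  classical
  have h2n : 2 ≤ q := hq ▸ Fintype.one_lt_card
  set κ : ℝ := (q : ℝ) with hκdef
  have hκ2 : (2 : ℝ) ≤ κ := by rw [hκdef]; exact_mod_cast h2n
  have hκ1 : (1 : ℝ) < κ := by linarith
  have hκ0 : (0 : ℝ) < κ := by linarith
  have hlogκ : 0 < Real.log κ := Real.log_pos hκ1
  set m : ℝ := sInf ((fun s : ℝ => (1 / ((r : ℝ) + 1)) *
      Real.logb q ((1 / (q : ℝ)) * ((1 + ((q : ℝ) - 1) * s) ^ (r + 1) +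
        ((q : ℝ) - 1) * (1 - s) ^ (r + 1))) -
      δ * Real.logb q s) '' Set.Ioc (0 : ℝ) 1) with hmdef
  have hne : (((fun s : ℝ => (1 / ((r : ℝ) + 1)) *
      Real.logb q ((1 / (q : ℝ)) * ((1 + ((q : ℝ) - 1) * s) ^ (r + 1) +
        ((q : ℝ) - 1) * (1 - s) ^ (r + 1))) -
      δ * Real.logb q s) '' Set.Ioc (0 : ℝ) 1)).Nonempty :=
    ⟨_, Set.mem_image_of_mem _ (by constructor <;> norm_num : (1:ℝ) ∈ Set.Ioc (0:ℝ) 1)⟩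
  obtain ⟨a, ⟨s, hsIoc, rfl⟩, hlt⟩ := Real.lt_sInf_add_pos hne (half_pos hε)
  beta_reduce at hlt
  rw [← hmdef] at hlt
  obtain ⟨hs0, hs1⟩ := hsIoc
  have hlogs : Real.log s ≤ 0 := Real.log_nonpos (le_of_lt hs0) hs1
  set bs : ℝ := ((1 + (κ - 1) * s) ^ (r + 1) + (κ - 1) * (1 - s) ^ (r + 1)) / κ with hbsdef
  have hbspos : 0 < bs := by
    apply div_pos _ (by linarith)
    have h1 : (0:ℝ) < (1 + (κ - 1) * s) ^ (r + 1) := by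
      apply pow_pos; nlinarith
    have h2 : (0:ℝ) ≤ (κ - 1) * (1 - s) ^ (r + 1) :=
      mul_nonneg (by linarith) (pow_nonneg (by linarith) _)
    linarith
  have hbsform : (1 / (q : ℝ)) * ((1 + ((q : ℝ) - 1) * s) ^ (r + 1) +
      ((q : ℝ) - 1) * (1 - s) ^ (r + 1)) = bs := by
    rw [hbsdef, ← hκdef]; ring
  rw [hbsform] at hlt
  obtain ⟨N₀, hN₀⟩ := exists_nat_ge (2 * Real.log (κ - 1) / (ε * Real.log κ))
  refine ⟨max N₀ 1, fun n hn hdvd => ?_⟩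
  have hn1 : 1 ≤ n := le_trans (le_max_right _ _) hn
  have hnpos : (0:ℝ) < n := by exact_mod_cast hn1
  have hNlog : Real.log (κ - 1) ≤ ε / 2 * n * Real.log κ := by
    have h1 : (N₀ : ℝ) ≤ n := by exact_mod_cast le_trans (le_max_left _ _) hn
    have h2 : 2 * Real.log (κ - 1) / (ε * Real.log κ) ≤ (n : ℝ) := le_trans hN₀ h1
    have h3 : 0 < ε * Real.log κ := mul_pos hε hlogκ
    rw [div_le_iff₀ h3] at h2
    nlinarith
  obtain ⟨t, ht⟩ := hdvd
  have htn : n = t * (r + 1) := by rw [ht, Nat.mul_comm]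
  set e : Fin t × Fin (r + 1) ≃ Fin n :=
    finProdFinEquiv.trans (finCongr htn.symm) with hedef
  set φ : (Fin n → F) →ₗ[F] (Fin t → F) :=
    { toFun := fun v b => ∑ j, v (e (b, j))
      map_add' := fun v w => by
        funext b; simp [Finset.sum_add_distrib]
      map_smul' := fun c v => by
        funext b; simp [Finset.mul_sum] } with hφdef
  set V : Submodule F (Fin n → F) := LinearMap.ker φ with hVdef
  have hVmem : ∀ v : Fin n → F, v ∈ V ↔ ∀ b, ∑ j, v (e (b, j)) = 0 := by
    intro v
    rw [hVdef, LinearMap.mem_ker, funext_iff]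
    constructor
    · intro h b; exact h b
    · intro h b; exact h b
  have hsurj : Function.Surjective φ := by
    intro y
    refine ⟨fun i => if (e.symm i).2 = 0 then y (e.symm i).1 else 0, ?_⟩
    funext b
    show (∑ j, if (e.symm (e (b, j))).2 = 0 then y (e.symm (e (b, j))).1 else 0) = y b
    have hj : ∀ j : Fin (r+1), (if (e.symm (e (b, j))).2 = 0 then y (e.symm (e (b, j))).1 else 0)
        = (if j = 0 then y b else 0) := by
      intro j; rw [Equiv.symm_apply_apply]
    rw [Finset.sum_congr rfl (fun j _ => hj j),
      Finset.sum_ite_eq' Finset.univ (0 : Fin (r+1)) (fun _ => y b)]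
    simp
  have hrankV : Module.finrank F V = r * t := by
    have hrn := LinearMap.finrank_range_add_finrank_ker φ
    rw [LinearMap.range_eq_top.mpr hsurj, finrank_top, Module.finrank_fintype_fun_eq_card,
      Module.finrank_fintype_fun_eq_card, Fintype.card_fin, Fintype.card_fin] at hrn
    rw [← hVdef] at hrn
    have h6 : t + Module.finrank F ↥V = t + r * t := by rw [hrn, htn]; ring
    exact Nat.add_left_cancel h6
  have hcardV : Nat.card {v : Fin n → F // v ∈ V} = q ^ (r * t) := by
    rw [Nat.card_eq_fintype_card]
    rw [show Fintype.card {v : Fin n → F // v ∈ V} = Fintype.card V from rfl]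
    rw [Module.card_eq_pow_finrank (K := F) (V := V), hrankV, hq]
  have hsum : (∑ v : Fin n → F, if v ∈ V then s ^ hammingNorm v else 0) = bs ^ t := by
    have hblocks := sum_pow_weight_blocks (F := F) s t (r+1) n e
    rw [hq] at hblocks
    calc (∑ v : Fin n → F, if v ∈ V then s ^ hammingNorm v else 0)
        = ∑ v : Fin n → F, (if (∀ b, ∑ j, v (e (b, j)) = 0) then s ^ hammingNorm v else 0) :=
          Finset.sum_congr rfl fun v _ => if_congr (hVmem v) rfl rfl
      _ = (((1 + ((q:ℝ) - 1) * s) ^ (r+1) + ((q:ℝ) - 1) * (1 - s) ^ (r+1)) / (q:ℝ)) ^ t := hblocks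
      _ = bs ^ t := by rw [hbsdef, hκdef]
  set d : ℕ := ⌈δ * n⌉₊ with hddef
  have hd1 : 1 ≤ d := Nat.ceil_pos.mpr (mul_pos hδ0 hnpos)
  have hdle : (d : ℝ) - 1 ≤ δ * n := by
    have hcl := Nat.ceil_lt_add_one (le_of_lt (mul_pos hδ0 hnpos))
    rw [← hddef] at hcl
    linarith
  have hdge : δ * n ≤ (d : ℝ) := Nat.le_ceil _
  set B : Finset (Fin n → F) :=
    Finset.univ.filter (fun v => v ∈ V ∧ hammingNorm v < d) with hBdef
  have hBmem : ∀ v, v ∈ B ↔ v ∈ V ∧ hammingNorm v < d := by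
    intro v; rw [hBdef]; simp
  have hBbound : (B.card : ℝ) * s ^ (d - 1) ≤ bs ^ t := by
    rw [← hsum]
    calc (B.card : ℝ) * s ^ (d - 1) = ∑ _v ∈ B, s ^ (d - 1) := by
          rw [Finset.sum_const, nsmul_eq_mul]
      _ ≤ ∑ v ∈ B, s ^ hammingNorm v := by
          refine Finset.sum_le_sum fun v hv => ?_
          have hw : hammingNorm v ≤ d - 1 := by
            have := ((hBmem v).mp hv).2; omega
          exact pow_le_pow_of_le_one (le_of_lt hs0) hs1 hw
      _ = ∑ v ∈ B, (if v ∈ V then s ^ hammingNorm v else 0) := by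
          refine Finset.sum_congr rfl fun v hv => ?_
          rw [if_pos ((hBmem v).mp hv).1]
      _ ≤ ∑ v : Fin n → F, (if v ∈ V then s ^ hammingNorm v else 0) := by
          refine Finset.sum_le_sum_of_subset_of_nonneg (Finset.subset_univ _) ?_
          intro v _ _
          by_cases hv : v ∈ V
          · rw [if_pos hv]; positivity
          · rw [if_neg hv]
  set L : ℝ := (n : ℝ) * ((r : ℝ) / ((r : ℝ) + 1) - m - ε) with hLdef
  by_cases hL0 : L ≤ 0
  · refine ⟨⊥, ?_, ?_, ?_⟩
    · rw [finrank_bot]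
      exact_mod_cast hL0
    · intro x hx y hy hxy
      rw [Submodule.mem_bot] at hx hy
      exact absurd (hx.trans hy.symm) hxy
    · intro i
      refine ⟨∅, Finset.notMem_empty i, by simp only [Finset.card_empty]; exact Nat.zero_le r, ?_⟩
      intro x hx y hy _
      rw [Submodule.mem_bot] at hx hy
      rw [hx, hy]
  · push_neg at hL0
    set k : ℕ := ⌈L⌉₊ with hkdef
    have hk1 : 1 ≤ k := Nat.ceil_pos.mpr hL0
    have hkleL : (k : ℝ) - 1 ≤ L := by
      have hcl := Nat.ceil_lt_add_one (le_of_lt hL0)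
      rw [← hkdef] at hcl
      linarith
    have hLstrict : L < (n:ℝ) * ((r : ℝ) / ((r : ℝ) + 1)
        - ((1 / ((r : ℝ) + 1)) * Real.logb q bs - δ * Real.logb q s) - ε / 2) := by
      rw [hLdef]
      have hineq : (r : ℝ) / ((r : ℝ) + 1) - m - ε < (r : ℝ) / ((r : ℝ) + 1)
          - ((1 / ((r : ℝ) + 1)) * Real.logb q bs - δ * Real.logb q s) - ε / 2 := by
        linarith
      exact mul_lt_mul_of_pos_left hineq hnpos
    have hrpos : (0:ℝ) < (r:ℝ) + 1 := by positivity
    have hfs_logκ : (n:ℝ) * ((1 / ((r : ℝ) + 1)) * Real.logb q bs - δ * Real.logb q s)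
        * Real.log κ = (t:ℝ) * Real.log bs - δ * n * Real.log s := by
      have hrt : (n:ℝ) = ((r:ℝ)+1) * t := by rw [htn]; push_cast; ring
      simp only [Real.logb, ← hκdef]
      field_simp
      rw [hrt]
      ring
    have hkey : Real.log (κ - 1) + ((k:ℝ) - 1) * Real.log κ + (t:ℝ) * Real.log bs
        < (r:ℝ) * (t:ℝ) * Real.log κ + ((d:ℝ) - 1) * Real.log s := by
      have hA : ((k:ℝ) - 1) * Real.log κ ≤ L * Real.log κ :=
        mul_le_mul_of_nonneg_right hkleL (le_of_lt hlogκ)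
      have hB2 : L * Real.log κ < ((n:ℝ) * ((r : ℝ) / ((r : ℝ) + 1)
          - ((1 / ((r : ℝ) + 1)) * Real.logb q bs - δ * Real.logb q s) - ε / 2))
            * Real.log κ :=
        mul_lt_mul_of_pos_right hLstrict hlogκ
      have hD : (n:ℝ) * ((r : ℝ) / ((r : ℝ) + 1)) * Real.log κ
          = (r:ℝ) * (t:ℝ) * Real.log κ := by
        have hrt2 : (n:ℝ) * ((r : ℝ) / ((r : ℝ) + 1)) = (r:ℝ) * (t:ℝ) := by
          rw [htn]; push_cast; field_simp
        rw [hrt2]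
      have hF : δ * n * Real.log s ≤ ((d:ℝ) - 1) * Real.log s :=
        mul_le_mul_of_nonpos_right hdle hlogs
      nlinarith [hA, hB2, hD, hF, hfs_logκ, hNlog]
    have hdia : (κ - 1) * κ ^ (k - 1) * bs ^ t < κ ^ (r * t) * s ^ (d - 1) := by
      have hκm1 : (0:ℝ) < κ - 1 := by linarith
      have hpos1 : (0:ℝ) < (κ - 1) * κ ^ (k - 1) * bs ^ t := by positivity
      have hpos2 : (0:ℝ) < κ ^ (r * t) * s ^ (d - 1) := by positivity
      rw [← Real.log_lt_log_iff hpos1 hpos2]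
      rw [Real.log_mul (by positivity) (by positivity),
        Real.log_mul (ne_of_gt hκm1) (by positivity),
        Real.log_mul (by positivity) (by positivity),
        Real.log_pow, Real.log_pow, Real.log_pow, Real.log_pow]
      have hc1 : ((k - 1 : ℕ) : ℝ) = (k:ℝ) - 1 := by
        rw [Nat.cast_sub hk1, Nat.cast_one]
      have hc2 : ((d - 1 : ℕ) : ℝ) = (d:ℝ) - 1 := by
        rw [Nat.cast_sub hd1, Nat.cast_one]
      have hc3 : ((r * t : ℕ) : ℝ) = (r:ℝ) * (t:ℝ) := by push_cast; ring
      rw [hc1, hc2, hc3]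
      linarith [hkey]
    have hcount : ∀ i, i < k → (Fintype.card F - 1) * Fintype.card F ^ i * B.card
        < Nat.card {v : Fin n → F // v ∈ V} := by
      intro i hik
      rw [hcardV, hq]
      have hκpow : (0:ℝ) < κ ^ i := pow_pos hκ0 i
      have hspow : (0:ℝ) < s ^ (d - 1) := pow_pos hs0 _
      have hreal : (κ - 1) * κ ^ i * B.card < κ ^ (r * t) := by
        have hpow : κ ^ i ≤ κ ^ (k - 1) := pow_le_pow_right₀ (by linarith) (by omega)
        have hBpos : (0:ℝ) ≤ (B.card : ℝ) := Nat.cast_nonneg _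
        have hstep1 : (κ - 1) * κ ^ i * B.card * s ^ (d-1)
            ≤ (κ - 1) * κ ^ (k-1) * bs ^ t := by
          calc (κ - 1) * κ ^ i * B.card * s ^ (d-1)
              ≤ (κ - 1) * κ ^ (k-1) * ((B.card : ℝ) * s ^ (d-1)) := by
                have h7 := mul_le_mul_of_nonneg_right hpow
                  (mul_nonneg hBpos (le_of_lt hspow))
                have h8 := mul_le_mul_of_nonneg_left h7 (show (0:ℝ) ≤ κ - 1 by linarith)
                linarith [h8]
            _ ≤ (κ - 1) * κ ^ (k-1) * bs ^ t := by
                have hfac : (0:ℝ) ≤ (κ - 1) * κ ^ (k-1) :=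
                  mul_nonneg (by linarith) (pow_nonneg (by linarith) _)
                exact mul_le_mul_of_nonneg_left hBbound hfac
        have hstep2 : (κ - 1) * κ ^ i * B.card * s ^ (d-1) < κ ^ (r * t) * s ^ (d-1) :=
          lt_of_le_of_lt hstep1 hdia
        exact lt_of_mul_lt_mul_right hstep2 (le_of_lt hspow)
      have hcast : (((q - 1) * q ^ i * B.card : ℕ) : ℝ) = (κ - 1) * κ ^ i * B.card := by
        rw [hκdef]
        push_cast [Nat.cast_sub (show 1 ≤ q by omega)]
        ring
      rw [← Nat.cast_lt (α := ℝ), hcast]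
      calc (κ - 1) * κ ^ i * B.card < κ ^ (r * t) := hreal
        _ = (((q:ℕ) ^ (r * t) : ℕ) : ℝ) := by rw [hκdef]; push_cast; ring
    obtain ⟨C, hCV, hCrank, hCw⟩ := gv_greedy d k hd1 V B hBmem hcount
    refine ⟨C, ?_, ?_, ?_⟩
    · rw [hCrank]
      exact Nat.le_ceil L
    · intro x hx y hy hxy
      have hsub : x - y ∈ C := C.sub_mem hx hy
      have hwt : d ≤ hammingNorm (x - y) := hCw _ hsub (sub_ne_zero_of_ne hxy)
      rw [hammingDist_eq_hammingNorm]
      calc δ * n ≤ (d:ℝ) := hdge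
        _ ≤ _ := by rw [show -x + y = -(x - y) by abel, show hammingNorm (-(x - y)) = hammingNorm (x - y) by simp only [hammingNorm, Pi.neg_apply, neg_ne_zero]]; exact_mod_cast hwt
    · intro i
      rcases hsplit : e.symm i with ⟨b, j⟩
      have hie : e (b, j) = i := by rw [← hsplit, Equiv.apply_symm_apply]
      refine ⟨(Finset.univ.erase j).image (fun j' => e (b, j')), ?_, ?_, ?_⟩
      · intro hmem
        obtain ⟨j', hj', heq⟩ := Finset.mem_image.mp hmem
        have h2 : (b, j') = (b, j) := e.injective (by rw [heq, hie])
        exact (Finset.mem_erase.mp hj').1 (congrArg Prod.snd h2)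
      · calc _ ≤ (Finset.univ.erase j).card := Finset.card_image_le
          _ ≤ r := by
            rw [Finset.card_erase_of_mem (Finset.mem_univ _), Finset.card_univ,
              Fintype.card_fin]
            omega
      · intro x hx y hy hagr
        have hxb := (hVmem x).mp (hCV hx) b
        have hyb := (hVmem y).mp (hCV hy) b
        have hsplit_x := Finset.add_sum_erase Finset.univ
          (fun j => x (e (b, j))) (Finset.mem_univ j)
        have hsplit_y := Finset.add_sum_erase Finset.univ
          (fun j => y (e (b, j))) (Finset.mem_univ j)
        have hsum_eq : (∑ j' ∈ Finset.univ.erase j, x (e (b, j')))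
            = ∑ j' ∈ Finset.univ.erase j, y (e (b, j')) := by
          refine Finset.sum_congr rfl fun j' hj' => ?_
          exact hagr _ (Finset.mem_image_of_mem _ hj')
        have hxe : x (e (b, j)) = - ∑ j' ∈ Finset.univ.erase j, x (e (b, j')) :=
          eq_neg_of_add_eq_zero_left (hsplit_x.trans hxb)
        have hye : y (e (b, j)) = - ∑ j' ∈ Finset.univ.erase j, y (e (b, j')) :=
          eq_neg_of_add_eq_zero_left (hsplit_y.trans hyb)
        rw [← hie, hxe, hye, hsum_eq]
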